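/- arXiv:2412.21129 — 2 statements merged into one kernel-verified Lean document; each statement's English description precedes it below -/
import Mathlib

section
/- Let f : ℕ → ℂ be a strongly additive function and C ≥ 1 a constant such that |f(p)| ≤ C for every prime p, Σ_{n≤N} |f(n)| ≪ N log log N, and Σ_{n≤N} |f(n)|² ≪ N (log log N)². Then Σ_{mn≤N} |f(mn) − (f(m)+f(n))| Λ(m) ≪ N log log N, where Λ is the von Mangoldt function. -/
open Filter Topology Finset ArithmeticFunction

noncomputable section

/-- A strongly additive complex-valued arithmetic function. -/
def StronglyAdditiveC (f : ℕ → ℂ) : Prop :=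
  (∀ m n : ℕ, Nat.Coprime m n → f (m * n) = f m + f n) ∧
  (∀ p k : ℕ, p.Prime → 1 ≤ k → f (p ^ k) = f p)

lemma aux_pointwise (f : ℕ → ℂ) (hadd : StronglyAdditiveC f) (C : ℝ)
    (hfp : ∀ p : ℕ, p.Prime → ‖f p‖ ≤ C)
    (p k n : ℕ) (hp : p.Prime) (hk : 1 ≤ k) (hn : n ≠ 0) :
    ‖f (p ^ k * n) - (f (p ^ k) + f n)‖ ≤ if p ∣ n then C else 0 := by
  by_cases hpn : p ∣ n
  · rw [if_pos hpn]
    set j := n.factorization p with hj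
    set n' := n / p ^ j with hn'
    have hj1 : 1 ≤ j := hp.factorization_pos_of_dvd hn hpn
    have hnn : p ^ j * n' = n := Nat.ordProj_mul_ordCompl_eq_self n p
    have hpn' : ¬ p ∣ n' := Nat.not_dvd_ordCompl hp hn
    have hcop : ∀ l, Nat.Coprime (p ^ l) n' := fun l =>
      Nat.Coprime.pow_left l ((Nat.Prime.coprime_iff_not_dvd hp).2 hpn')
    have e1 : f n = f p + f n' := by
      rw [← hnn, hadd.1 _ _ (hcop j), hadd.2 p j hp hj1]
    have e2 : f (p ^ k * n) = f p + f n' := by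
      rw [← hnn, ← mul_assoc, ← pow_add, hadd.1 _ _ (hcop (k+j)),
        hadd.2 p (k+j) hp (le_add_right hk)]
    have e3 : f (p ^ k) = f p := hadd.2 p k hp hk
    rw [e1, e2, e3]
    have h4 : f p + f n' - (f p + (f p + f n')) = -f p := by ring
    rw [h4, norm_neg]
    exact hfp p hp
  · rw [if_neg hpn]
    have : f (p ^ k * n) = f (p ^ k) + f n :=
      hadd.1 _ _ (Nat.Coprime.pow_left k ((Nat.Prime.coprime_iff_not_dvd hp).2 hpn))
    simp [this]

lemma aux_inner (C : ℝ) (p M : ℕ) :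
    ∑ n ∈ Finset.Icc 1 M, (if p ∣ n then C else 0) = C * (M / p : ℕ) := by
  rw [← Finset.sum_filter, Finset.sum_const, show Finset.Icc 1 M = Finset.Ioc 0 M from
    Finset.Icc_add_one_left_eq_Ioc 0 M, Nat.Ioc_filter_dvd_card_eq_div, nsmul_eq_mul, mul_comm]

lemma aux_geom (p N : ℕ) (hp : 2 ≤ p) :
    ∑ k ∈ Finset.Icc 1 N, Real.log p / (p:ℝ) ^ (k+1) ≤ 2 * Real.log p / (p:ℝ) ^ 2 := by
  have hL : (0:ℝ) ≤ Real.log p := Real.log_nonneg (by exact_mod_cast Nat.one_le_of_lt hp)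
  have hp0 : (0:ℝ) < p := by positivity
  rw [← Finset.Ico_add_one_right_eq_Icc, Finset.sum_Ico_eq_sum_range]
  have key : ∀ i ∈ Finset.range (N + 1 - 1),
      Real.log p / (p:ℝ) ^ (1 + i + 1) ≤ (Real.log p / (p:ℝ) ^ 2) * (1/2)^i := by
    intro i _
    have h1 : (p:ℝ) ^ (1 + i + 1) = (p:ℝ)^2 * (p:ℝ)^i := by ring
    have h2 : (2:ℝ)^i ≤ (p:ℝ)^i := by
      apply pow_le_pow_left₀ (by norm_num)
      exact_mod_cast hp
    rw [h1, one_div, inv_pow, ← div_eq_mul_inv, div_div]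
    gcongr
  calc ∑ i ∈ Finset.range (N + 1 - 1), Real.log p / (p:ℝ) ^ (1 + i + 1)
      ≤ ∑ i ∈ Finset.range (N + 1 - 1), (Real.log p / (p:ℝ) ^ 2) * (1/2)^i :=
        Finset.sum_le_sum key
    _ = (Real.log p / (p:ℝ) ^ 2) * ∑ i ∈ Finset.range (N + 1 - 1), ((1:ℝ)/2)^i := by
        rw [Finset.mul_sum]
    _ ≤ (Real.log p / (p:ℝ) ^ 2) * 2 := by
        apply mul_le_mul_of_nonneg_left (sum_geometric_two_le _) (by positivity)
    _ = 2 * Real.log p / (p:ℝ) ^ 2 := by ring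


lemma aux_rpow (p : ℕ) (hp : 1 ≤ p) :
    2 * Real.log p / (p:ℝ) ^ 2 ≤ 4 * (p:ℝ) ^ (-(3/2) : ℝ) := by
  have hp0 : (0:ℝ) < p := by exact_mod_cast hp
  have hp1 : (1:ℝ) ≤ p := by exact_mod_cast hp
  have hs1 : (1:ℝ) ≤ Real.sqrt p := by
    rw [show (1:ℝ) = Real.sqrt 1 from (Real.sqrt_one).symm]
    exact Real.sqrt_le_sqrt hp1
  have hlog : Real.log p ≤ 2 * Real.sqrt p := by
    have := Real.log_le_sub_one_of_pos (show (0:ℝ) < Real.sqrt p by linarith)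
    have hls : Real.log (Real.sqrt p) = Real.log p / 2 := Real.log_sqrt (le_of_lt hp0)
    rw [hls] at this
    linarith
  have key : Real.sqrt p / (p:ℝ) ^ 2 = (p:ℝ) ^ (-(3/2) : ℝ) := by
    rw [Real.sqrt_eq_rpow, show ((p:ℝ) ^ 2) = (p:ℝ) ^ ((2:ℕ):ℝ) from (Real.rpow_natCast _ 2).symm,
      ← Real.rpow_sub hp0]
    norm_num
  calc 2 * Real.log p / (p:ℝ) ^ 2 ≤ 2 * (2 * Real.sqrt p) / (p:ℝ) ^ 2 := by gcongr
    _ = 4 * (Real.sqrt p / (p:ℝ) ^ 2) := by ring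
    _ = 4 * (p:ℝ) ^ (-(3/2) : ℝ) := by rw [key]

lemma aux_pp (m : ℕ) (h : IsPrimePow m) :
    m.minFac.Prime ∧ 1 ≤ m.factorization m.minFac ∧
      m.minFac ^ (m.factorization m.minFac) = m := by
  obtain ⟨p, k, hp, hk, rfl⟩ := (isPrimePow_nat_iff m).1 h
  have h1 : (p ^ k).minFac = p := hp.pow_minFac hk.ne'
  have h2 : (p ^ k).factorization p = k := by
    rw [hp.factorization_pow, Finsupp.single_eq_same]
  rw [h1, h2]; exact ⟨hp, hk, rfl⟩

lemma aux_primepow_sum (N : ℕ) :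
    ∑ m ∈ (Finset.Icc 1 N).filter (fun m => IsPrimePow m),
      Real.log m.minFac / ((m:ℝ) * m.minFac) ≤
    4 * ∑' (n : ℕ), ((n:ℝ) ^ (-(3/2) : ℝ)) := by
  classical
  set s := (Finset.Icc 1 N).filter (fun m => IsPrimePow m) with hs
  set e : ℕ → ℕ × ℕ := fun m => (m.minFac, m.factorization m.minFac) with he
  set h : ℕ × ℕ → ℝ := fun q => Real.log q.1 / (q.1:ℝ) ^ (q.2 + 1) with hh
  have hpp : ∀ m ∈ s, IsPrimePow m := by
    intro m hm; exact (Finset.mem_filter.1 hm).2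
  have hmem : ∀ m ∈ s, 1 ≤ m ∧ m ≤ N := by
    intro m hm
    have := (Finset.mem_filter.1 hm).1
    exact Finset.mem_Icc.1 this
  have hinj : ∀ m₁ ∈ s, ∀ m₂ ∈ s, e m₁ = e m₂ → m₁ = m₂ := by
    intro m₁ h₁ m₂ h₂ hee
    have a1 := aux_pp m₁ (hpp m₁ h₁)
    have a2 := aux_pp m₂ (hpp m₂ h₂)
    have : (e m₁).1 ^ (e m₁).2 = (e m₂).1 ^ (e m₂).2 := by rw [hee]
    simpa [he, a1.2.2, a2.2.2] using this
  have step1 : ∑ m ∈ s, Real.log m.minFac / ((m:ℝ) * m.minFac)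
      = ∑ q ∈ s.image e, h q := by
    rw [Finset.sum_image hinj]
    apply Finset.sum_congr rfl
    intro m hm
    obtain ⟨hp, hk, hpk⟩ := aux_pp m (hpp m hm)
    simp only [hh, he]
    congr 1
    have hc : ((m.minFac:ℝ)) ^ (m.factorization m.minFac) = (m:ℝ) := by exact_mod_cast hpk
    rw [pow_succ, hc]
  have hsub : s.image e ⊆ Finset.Icc 1 N ×ˢ Finset.Icc 1 N := by
    intro q hq
    obtain ⟨m, hm, rfl⟩ := Finset.mem_image.1 hq
    obtain ⟨hp, hk, hpk⟩ := aux_pp m (hpp m hm)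
    obtain ⟨hm1, hmN⟩ := hmem m hm
    rw [Finset.mem_product, Finset.mem_Icc, Finset.mem_Icc]
    have hpm : m.minFac ≤ m := Nat.le_of_dvd (by omega) (Nat.minFac_dvd m)
    have hkm : m.factorization m.minFac < m := by
      calc m.factorization m.minFac < 2 ^ (m.factorization m.minFac) :=
            Nat.lt_two_pow_self
        _ ≤ m.minFac ^ (m.factorization m.minFac) :=
            Nat.pow_le_pow_left hp.two_le _
        _ = m := hpk
    exact ⟨⟨hp.one_lt.le.trans' (by norm_num), hpm.trans hmN⟩, ⟨hk, hkm.le.trans hmN⟩⟩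
  have hnonneg : ∀ q ∈ Finset.Icc 1 N ×ˢ Finset.Icc 1 N, q ∉ s.image e → 0 ≤ h q := by
    intro q hq _
    rw [Finset.mem_product, Finset.mem_Icc] at hq
    have h1 : (1:ℝ) ≤ q.1 := by exact_mod_cast hq.1.1
    have : (0:ℝ) ≤ Real.log q.1 := Real.log_nonneg h1
    positivity
  have step2 : ∑ q ∈ s.image e, h q ≤ ∑ q ∈ Finset.Icc 1 N ×ˢ Finset.Icc 1 N, h q :=
    Finset.sum_le_sum_of_subset_of_nonneg hsub hnonneg
  have step3 : ∑ q ∈ Finset.Icc 1 N ×ˢ Finset.Icc 1 N, h q ≤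
      ∑ p ∈ Finset.Icc 1 N, 4 * (p:ℝ) ^ (-(3/2) : ℝ) := by
    rw [Finset.sum_product]
    apply Finset.sum_le_sum
    intro p hp
    have hp1 : 1 ≤ p := (Finset.mem_Icc.1 hp).1
    by_cases h2p : 2 ≤ p
    · exact (aux_geom p N h2p).trans (aux_rpow p hp1)
    · have : p = 1 := by omega
      subst this
      simp [hh]
  have step4 : ∑ p ∈ Finset.Icc 1 N, 4 * (p:ℝ) ^ (-(3/2) : ℝ) ≤
      4 * ∑' (n : ℕ), ((n:ℝ) ^ (-(3/2) : ℝ)) := by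
    rw [← Finset.mul_sum]
    have hsum : Summable (fun n : ℕ => (n:ℝ) ^ (-(3/2) : ℝ)) :=
      Real.summable_nat_rpow.mpr (by norm_num)
    have := hsum.sum_le_tsum (Finset.Icc 1 N)
      (fun i _ => Real.rpow_nonneg (Nat.cast_nonneg i) _)
    linarith
  calc ∑ m ∈ s, Real.log m.minFac / ((m:ℝ) * m.minFac) = ∑ q ∈ s.image e, h q := step1
    _ ≤ _ := step2
    _ ≤ _ := step3
    _ ≤ _ := step4

theorem statement8
    (f : ℕ → ℂ) (hadd : StronglyAdditiveC f) (C : ℝ) (hC : 1 ≤ C)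
    (hfp : ∀ p : ℕ, p.Prime → ‖f p‖ ≤ C)
    (C₁ : ℝ) (h1 : ∀ N : ℕ, 3 ≤ N →
      ∑ n ∈ Finset.Icc 1 N, ‖f n‖ ≤ C₁ * N * Real.log (Real.log N))
    (C₂ : ℝ) (h2 : ∀ N : ℕ, 3 ≤ N →
      ∑ n ∈ Finset.Icc 1 N, ‖f n‖ ^ 2 ≤ C₂ * N * (Real.log (Real.log N)) ^ 2) :
    ∃ K : ℝ, ∀ N : ℕ, 3 ≤ N →
      ∑ m ∈ Finset.Icc 1 N, ∑ n ∈ Finset.Icc 1 (N / m),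
        ‖f (m * n) - (f m + f n)‖ * ArithmeticFunction.vonMangoldt m ≤
      K * N * Real.log (Real.log N) := by
  classical
  set B := ∑' (n : ℕ), ((n:ℝ) ^ (-(3/2) : ℝ)) with hB
  have hB0 : 0 ≤ B := tsum_nonneg fun n => Real.rpow_nonneg (Nat.cast_nonneg n) _
  have hC0 : (0:ℝ) < C := lt_of_lt_of_le one_pos hC
  have hll3 : 0 < Real.log (Real.log 3) := by
    apply Real.log_pos
    rw [Real.lt_log_iff_exp_lt (by norm_num)]
    linarith [Real.exp_one_lt_d9]
  refine ⟨4 * C * B / Real.log (Real.log 3), fun N hN => ?_⟩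
  have step1 : ∀ m ∈ Finset.Icc 1 N,
      (∑ n ∈ Finset.Icc 1 (N/m), ‖f (m*n) - (f m + f n)‖ * ArithmeticFunction.vonMangoldt m) ≤
      (if IsPrimePow m then C * (N:ℝ) * (Real.log m.minFac / ((m:ℝ) * m.minFac)) else 0) := by
    intro m _
    by_cases hm' : IsPrimePow m
    · rw [if_pos hm']
      obtain ⟨hp, hk, hpk⟩ := aux_pp m hm'
      set p := m.minFac with hpdef
      set k := m.factorization m.minFac with hkdef
      have hΛ : ArithmeticFunction.vonMangoldt m = Real.log p := by
        rw [ArithmeticFunction.vonMangoldt_apply, if_pos hm']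
      have hL0 : (0:ℝ) ≤ Real.log p := Real.log_nonneg (by exact_mod_cast hp.one_lt.le)
      calc ∑ n ∈ Finset.Icc 1 (N/m), ‖f (m*n) - (f m + f n)‖ * ArithmeticFunction.vonMangoldt m
          ≤ ∑ n ∈ Finset.Icc 1 (N/m), (if p ∣ n then C else 0) * Real.log p := by
            apply Finset.sum_le_sum
            intro n hn
            rw [hΛ]
            apply mul_le_mul_of_nonneg_right _ hL0
            have hn1 : n ≠ 0 := by have := (Finset.mem_Icc.1 hn).1; omega
            have := aux_pointwise f hadd C hfp p k n hp hk hn1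
            rwa [hpk] at this
        _ = (∑ n ∈ Finset.Icc 1 (N/m), (if p ∣ n then C else 0)) * Real.log p := by
            rw [Finset.sum_mul]
        _ = C * ((N/m/p : ℕ)) * Real.log p := by rw [aux_inner]
        _ = C * ((N/(m*p) : ℕ)) * Real.log p := by rw [Nat.div_div_eq_div_mul]
        _ ≤ C * ((N:ℝ)/((m:ℝ)*(p:ℝ))) * Real.log p := by
            apply mul_le_mul_of_nonneg_right _ hL0
            apply mul_le_mul_of_nonneg_left _ (le_of_lt hC0)
            calc ((N/(m*p):ℕ):ℝ) ≤ (N:ℝ)/((m*p:ℕ):ℝ) := Nat.cast_div_le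
              _ = (N:ℝ)/((m:ℝ)*(p:ℝ)) := by push_cast; ring
        _ = C * (N:ℝ) * (Real.log p / ((m:ℝ) * p)) := by ring
    · rw [if_neg hm']
      have hΛ : ArithmeticFunction.vonMangoldt m = 0 := by
        rw [ArithmeticFunction.vonMangoldt_apply, if_neg hm']
      simp [hΛ]
  have step2 : ∑ m ∈ Finset.Icc 1 N, ∑ n ∈ Finset.Icc 1 (N / m),
        ‖f (m * n) - (f m + f n)‖ * ArithmeticFunction.vonMangoldt m ≤
      C * (N:ℝ) * (4 * B) := by
    calc ∑ m ∈ Finset.Icc 1 N, ∑ n ∈ Finset.Icc 1 (N / m),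
          ‖f (m * n) - (f m + f n)‖ * ArithmeticFunction.vonMangoldt m
        ≤ ∑ m ∈ Finset.Icc 1 N,
          (if IsPrimePow m then C * (N:ℝ) * (Real.log m.minFac / ((m:ℝ) * m.minFac)) else 0) :=
          Finset.sum_le_sum step1
      _ = ∑ m ∈ (Finset.Icc 1 N).filter (fun m => IsPrimePow m),
          C * (N:ℝ) * (Real.log m.minFac / ((m:ℝ) * m.minFac)) := (Finset.sum_filter _ _).symm
      _ = C * (N:ℝ) * ∑ m ∈ (Finset.Icc 1 N).filter (fun m => IsPrimePow m),
          Real.log m.minFac / ((m:ℝ) * m.minFac) := by rw [Finset.mul_sum]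
      _ ≤ C * (N:ℝ) * (4 * B) := by
          apply mul_le_mul_of_nonneg_left (aux_primepow_sum N) (by positivity)
  have hmono : Real.log (Real.log 3) ≤ Real.log (Real.log N) := by
    apply Real.log_le_log (Real.log_pos (by norm_num))
    apply Real.log_le_log (by norm_num)
    exact_mod_cast hN
  have hK0 : 0 ≤ 4 * C * B / Real.log (Real.log 3) := by positivity
  calc ∑ m ∈ Finset.Icc 1 N, ∑ n ∈ Finset.Icc 1 (N / m),
        ‖f (m * n) - (f m + f n)‖ * ArithmeticFunction.vonMangoldt m
      ≤ C * (N:ℝ) * (4 * B) := step2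
    _ = (4 * C * B / Real.log (Real.log 3)) * N * Real.log (Real.log 3) := by
        field_simp
    _ ≤ (4 * C * B / Real.log (Real.log 3)) * N * Real.log (Real.log N) := by
        apply mul_le_mul_of_nonneg_left hmono (by positivity)
end
end

section
/- Let q ∈ ℕ and a ∈ ℤ with gcd(a,q) = 1, and for each k ∈ ℕ set a_k = a k / gcd(q,k) and q_k = q / gcd(q,k). Then Σ_{k=1}^∞ (1/(φ(q_k) k²)) Σ_{ℓ=1, gcd(ℓ,q_k)=1}^{q_k} e(a_k ℓ / q_k) = ζ(2) (−1)^{ω(q)} (Π_{p|q} p) / q². -/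
open Filter Topology Finset

noncomputable section

/-- `e(x) = exp(2πix)`. -/
def ee (x : ℝ) : ℂ := Complex.exp (2 * Real.pi * Complex.I * x)

namespace Stmt19

open ArithmeticFunction
open scoped ArithmeticFunction.Moebius ArithmeticFunction.zeta

lemma ee_int (b : ℤ) : ee b = 1 := by
  unfold ee
  rw [show ((2:ℂ) * Real.pi * Complex.I * (b:ℝ)) = (b:ℤ) * (2 * Real.pi * Complex.I) by push_cast; ring]
  exact Complex.exp_int_mul_two_pi_mul_I b

lemma ee_pow (x : ℝ) (m : ℕ) : ee x ^ m = ee (m * x) := by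
  unfold ee
  rw [← Complex.exp_nat_mul]
  congr 1
  push_cast
  ring

lemma geo0 (N : ℕ) (hN : 0 < N) (b : ℤ) (h : ¬ ((N:ℤ) ∣ b)) :
    ∑ m ∈ Finset.Icc 1 N, ee ((b:ℝ) * m / N) = 0 := by
  have hN0 : (N:ℝ) ≠ 0 := Nat.cast_ne_zero.mpr hN.ne'
  set x : ℂ := ee ((b:ℝ) / N) with hx
  have hxm : ∀ m : ℕ, ee ((b:ℝ) * m / N) = x ^ m := by
    intro m
    rw [hx, ee_pow]
    congr 1
    field_simp
  have hxN : x ^ N = 1 := by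
    rw [hx, ee_pow]
    rw [show ((N:ℝ) * ((b:ℝ)/N)) = ((b:ℤ):ℝ) by field_simp]
    exact ee_int b
  have hx1 : x ≠ 1 := by
    intro hc
    rw [hx] at hc
    unfold ee at hc
    rw [Complex.exp_eq_one_iff] at hc
    obtain ⟨n, hn⟩ := hc
    apply h
    have h2 : (2 * Real.pi * Complex.I : ℂ) ≠ 0 := by
      simp [Complex.ext_iff, Real.pi_ne_zero, Complex.I_ne_zero]
    have h3 : (((b:ℝ)/N : ℝ) : ℂ) = (n:ℂ) := by
      apply mul_left_cancel₀ h2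
      rw [hn]; ring
    have h4 : ((b:ℝ)/N) = (n:ℝ) := by exact_mod_cast h3
    have hb : (b:ℝ) = n * N := by field_simp at h4; linarith [h4]
    have : b = n * N := by exact_mod_cast hb
    exact ⟨n, by linarith [this]⟩
  simp_rw [hxm]
  have hIcc : Finset.Icc 1 N = Finset.Ico 1 (N+1) := by
    rw [Finset.Ico_add_one_right_eq_Icc]
  rw [hIcc, geom_sum_Ico hx1 (by omega), pow_succ, hxN]
  simp

lemma key_moebius (m : ℕ) : (∑ d ∈ m.divisors, ((μ d : ℤ) : ℂ)) = if m = 1 then 1 else 0 := by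
  have h := congrArg (fun f : ArithmeticFunction ℤ => ((f m : ℤ) : ℂ)) moebius_mul_coe_zeta
  simp only [coe_mul_zeta_apply, one_apply] at h
  rw [apply_ite ((↑) : ℤ → ℂ)] at h
  push_cast at h
  rw [← h]

lemma reindex (n d : ℕ) (hd : d ∣ n) (hn : 0 < n) (f : ℕ → ℂ) :
    ∑ ℓ ∈ (Finset.Icc 1 n).filter (fun ℓ => d ∣ ℓ), f ℓ = ∑ m ∈ Finset.Icc 1 (n/d), f (d*m) := by
  have hd0 : 0 < d := Nat.pos_of_dvd_of_pos hd hn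
  apply Finset.sum_nbij' (i := fun ℓ => ℓ / d) (j := fun m => d * m)
  · intro ℓ hℓ
    simp only [Finset.mem_filter, Finset.mem_Icc] at hℓ ⊢
    obtain ⟨⟨h1, h2⟩, h3⟩ := hℓ
    constructor
    · exact Nat.one_le_div_iff hd0 |>.mpr (Nat.le_of_dvd (by omega) h3)
    · exact Nat.div_le_div_right h2
  · intro m hm
    simp only [Finset.mem_filter, Finset.mem_Icc] at hm ⊢
    obtain ⟨h1, h2⟩ := hm
    refine ⟨⟨by nlinarith, ?_⟩, Dvd.intro m rfl⟩
    calc d * m ≤ d * (n/d) := Nat.mul_le_mul_left d h2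
      _ = n := Nat.mul_div_cancel' hd
  · intro ℓ hℓ
    simp only [Finset.mem_filter, Finset.mem_Icc] at hℓ
    exact Nat.mul_div_cancel' hℓ.2
  · intro m hm
    exact Nat.mul_div_cancel_left m hd0
  · intro ℓ hℓ
    simp only [Finset.mem_filter, Finset.mem_Icc] at hℓ
    rw [Nat.mul_div_cancel' hℓ.2]

lemma inner_val (n d : ℕ) (hd : d ∣ n) (hn : 0 < n) (b : ℤ) (hb : Int.gcd b n = 1) :
    ∑ m ∈ Finset.Icc 1 (n/d), ee ((b:ℝ) * (d*m) / n) = if d = n then 1 else 0 := by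
  have hd0 : 0 < d := Nat.pos_of_dvd_of_pos hd hn
  set N := n / d with hN
  have hdN : n = d * N := (Nat.mul_div_cancel' hd).symm
  have hN0 : 0 < N := Nat.div_pos (Nat.le_of_dvd hn hd) hd0
  have harg : ∀ m : ℕ, (b:ℝ) * (d*m) / n = (b:ℝ) * m / N := by
    intro m
    rw [hdN]
    have : ((d:ℝ)) ≠ 0 := Nat.cast_ne_zero.mpr hd0.ne'
    have : ((N:ℝ)) ≠ 0 := Nat.cast_ne_zero.mpr hN0.ne'
    push_cast
    field_simp
  simp_rw [harg]
  by_cases hdn : d = n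
  · have hN1 : N = 1 := by rw [hN, hdn, Nat.div_self hn]
    rw [hN1, if_pos hdn]
    rw [show Finset.Icc 1 1 = {1} from rfl]
    rw [Finset.sum_singleton]
    rw [show ((b:ℝ) * (1:ℕ) / (1:ℕ)) = ((b:ℤ):ℝ) by push_cast; ring]
    exact ee_int b
  · rw [if_neg hdn]
    apply geo0 N hN0 b
    intro hdvd
    have hNn : (N:ℤ) ∣ (n:ℤ) := ⟨d, by rw [hdN]; push_cast; ring⟩
    have : (N:ℤ) ∣ (Int.gcd b n : ℤ) := Int.dvd_coe_gcd hdvd hNn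
    rw [hb] at this
    have hN1 : N = 1 := by
      have := Int.le_of_dvd one_pos this
      omega
    exact hdn (by rw [hdN, hN1, mul_one])

lemma ram (n : ℕ) (hn : 0 < n) (b : ℤ) (hb : Int.gcd b n = 1) :
    ∑ ℓ ∈ (Finset.Icc 1 n).filter (fun ℓ => Nat.Coprime ℓ n), ee ((b:ℝ) * ℓ / n)
      = ((μ n : ℤ) : ℂ) := by
  have hn0 : n ≠ 0 := hn.ne'
  have hdiv : ∀ ℓ : ℕ, 0 < ℓ → (Nat.gcd ℓ n).divisors = n.divisors.filter (fun d => d ∣ ℓ) := by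
    intro ℓ hℓ
    ext d
    simp only [Nat.mem_divisors, Finset.mem_filter]
    constructor
    · rintro ⟨h1, -⟩
      exact ⟨⟨h1.trans (Nat.gcd_dvd_right ℓ n), hn0⟩, h1.trans (Nat.gcd_dvd_left ℓ n)⟩
    · rintro ⟨⟨h1, -⟩, h2⟩
      refine ⟨Nat.dvd_gcd h2 h1, ?_⟩
      simp [Nat.gcd_eq_zero_iff, hn0]
  calc
    ∑ ℓ ∈ (Finset.Icc 1 n).filter (fun ℓ => Nat.Coprime ℓ n), ee ((b:ℝ) * ℓ / n)
        = ∑ ℓ ∈ Finset.Icc 1 n, (if Nat.Coprime ℓ n then ee ((b:ℝ) * ℓ / n) else 0) :=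
      Finset.sum_filter _ _
    _ = ∑ ℓ ∈ Finset.Icc 1 n, ∑ d ∈ n.divisors, (if d ∣ ℓ then ((μ d : ℤ):ℂ) * ee ((b:ℝ) * ℓ / n) else 0) := by
      apply Finset.sum_congr rfl
      intro ℓ hℓ
      rw [Finset.mem_Icc] at hℓ
      rw [← Finset.sum_filter, ← hdiv ℓ (by omega), ← Finset.sum_mul, key_moebius]
      unfold Nat.Coprime
      by_cases hc : Nat.gcd ℓ n = 1 <;> simp [hc]
    _ = ∑ d ∈ n.divisors, ∑ ℓ ∈ Finset.Icc 1 n, (if d ∣ ℓ then ((μ d : ℤ):ℂ) * ee ((b:ℝ) * ℓ / n) else 0) :=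
      Finset.sum_comm
    _ = ∑ d ∈ n.divisors, ((μ d : ℤ):ℂ) * (if d = n then 1 else 0) := by
      apply Finset.sum_congr rfl
      intro d hd
      rw [Nat.mem_divisors] at hd
      rw [← Finset.sum_filter, reindex n d hd.1 hn, ← inner_val n d hd.1 hn b hb, Finset.mul_sum]
      apply Finset.sum_congr rfl
      intro m hm
      push_cast
      ring
    _ = ((μ n : ℤ) : ℂ) := by
      simp_rw [mul_ite, mul_one, mul_zero]
      rw [Finset.sum_ite_eq' n.divisors n (fun d => ((μ d : ℤ):ℂ))]
      rw [if_pos (Nat.mem_divisors_self n hn0)]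


lemma basel_shift : HasSum (fun m : ℕ => (1:ℝ)/((m:ℝ)+1)^2) (Real.pi^2/6) := by
  have h := (hasSum_nat_add_iff (f := fun n : ℕ => (1:ℝ)/(n:ℝ)^2) 1
    (g := Real.pi^2/6)).mpr
  simp only [Finset.range_one, Finset.sum_singleton, Nat.cast_zero] at h
  have h2 := h (by simpa using hasSum_zeta_two)
  convert h2 using 2 with m
  case e'_5 =>
    push_cast
    ring
  case e'_3 => rfl

lemma hasSum_mult (d : ℕ) (hd : 0 < d) :
    HasSum (fun k : ℕ => if d ∣ (k+1) then (1:ℝ)/((k:ℝ)+1)^2 else 0)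
      (Real.pi^2/6 / (d:ℝ)^2) := by
  have hd0 : (d:ℝ) ≠ 0 := Nat.cast_ne_zero.mpr hd.ne'
  set g : ℕ → ℝ := fun k => if d ∣ (k+1) then (1:ℝ)/((k:ℝ)+1)^2 else 0 with hg
  have hi : Function.Injective (fun m : ℕ => d * m + (d - 1)) := by
    intro m m' h
    simp only [Nat.add_right_cancel_iff] at h
    exact Nat.eq_of_mul_eq_mul_left hd h
  have hrange : ∀ k, k ∉ Set.range (fun m : ℕ => d * m + (d - 1)) → g k = 0 := by
    intro k hk
    rw [hg]
    simp only
    rw [if_neg]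
    intro ⟨c, hc⟩
    apply hk
    rcases c with _ | c'
    · omega
    · refine ⟨c', ?_⟩
      simp only
      have h1 : d * (c' + 1) = d * c' + d := by ring
      omega
  have heq : (g ∘ fun m : ℕ => d * m + (d - 1)) = fun m : ℕ => (1/(d:ℝ)^2) * (1/((m:ℝ)+1)^2) := by
    funext m
    have h1 : d * m + (d-1) + 1 = d * (m + 1) := by
      have h2 : d * (m + 1) = d * m + d := by ring
      omega
    simp only [Function.comp_apply, hg]
    rw [if_pos ⟨m + 1, h1⟩]
    have h2 : ((d * m + (d-1) : ℕ) : ℝ) + 1 = (((d*(m+1) : ℕ)):ℝ) := by exact_mod_cast congrArg (fun t : ℕ => (t:ℝ)) h1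
    push_cast at h2 ⊢
    rw [h2, mul_pow]
    rw [one_div, mul_inv, ← one_div, ← one_div ((_:ℝ)^2)]
  have hcomp : HasSum (g ∘ fun m : ℕ => d * m + (d - 1)) (Real.pi^2/6 / (d:ℝ)^2) := by
    rw [heq]
    have h3 := basel_shift.mul_left (1/(d:ℝ)^2)
    convert h3 using 1
    case e'_6 => ring
    case e'_3 => rfl
  exact (hi.hasSum_iff hrange).mp hcomp


/-- `F q e = μ(q/e)/φ(q/e)` -/
def Ff (q e : ℕ) : ℝ := ((μ (q/e) : ℤ) : ℝ) / ((q/e).totient : ℝ)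

/-- Möbius transform of `Ff q` along divisors. -/
def Ca (q d : ℕ) : ℝ := ∑ e ∈ d.divisors, ((μ (d/e) : ℤ) : ℝ) * Ff q e

lemma Ca_flip (q d : ℕ) (hd : d ≠ 0) :
    Ca q d = ∑ i ∈ d.divisors, ((μ i : ℤ):ℝ) * Ff q (d/i) := by
  unfold Ca
  rw [← Nat.sum_div_divisors d (fun e => ((μ (d/e) : ℤ):ℝ) * Ff q e)]
  exact (Finset.sum_congr rfl fun i hi => by
    rw [Nat.div_div_self (Nat.mem_divisors.mp hi).1 hd]).symm

lemma sum_Ca (q : ℕ) : ∀ g > 0, ∑ d ∈ g.divisors, Ca q d = Ff q g := by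
  rw [sum_eq_iff_sum_smul_moebius_eq]
  intro n hn
  rw [Nat.sum_divisorsAntidiagonal (f := fun x y => (μ x : ℤ) • Ff q y)]
  rw [Ca_flip q n hn.ne']
  exact Finset.sum_congr rfl fun i _ => by rw [zsmul_eq_mul]

lemma filter_divisors (q m : ℕ) (hq : 0 < q) (hm : 0 < m) :
    q.divisors.filter (fun d => d ∣ m) = (Nat.gcd q m).divisors := by
  ext d
  simp only [Nat.mem_divisors, Finset.mem_filter, Nat.dvd_gcd_iff]
  constructor
  · rintro ⟨⟨h1, -⟩, h2⟩
    exact ⟨⟨h1, h2⟩, by simp [Nat.gcd_eq_zero_iff, hq.ne']⟩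
  · rintro ⟨⟨h1, h2⟩, -⟩
    exact ⟨⟨h1, hq.ne'⟩, h2⟩

lemma main_hasSum (q : ℕ) (hq : 0 < q) :
    HasSum (fun k : ℕ => Ff q (Nat.gcd q (k+1)) / ((k:ℝ)+1)^2)
      (∑ d ∈ q.divisors, Ca q d * (Real.pi^2/6/(d:ℝ)^2)) := by
  have h1 : ∀ k : ℕ, Ff q (Nat.gcd q (k+1)) / ((k:ℝ)+1)^2
      = ∑ d ∈ q.divisors, (Ca q d * (if d ∣ (k+1) then (1:ℝ)/((k:ℝ)+1)^2 else 0)) := by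
    intro k
    have h2 : ∀ d, (Ca q d * (if d ∣ (k+1) then (1:ℝ)/((k:ℝ)+1)^2 else 0))
        = (if d ∣ (k+1) then Ca q d else 0) / ((k:ℝ)+1)^2 := by
      intro d
      split <;> simp [div_eq_mul_inv]
    simp_rw [h2]
    rw [← Finset.sum_div, ← Finset.sum_filter, filter_divisors q (k+1) hq (by omega),
      sum_Ca q _ (Nat.gcd_pos_of_pos_left _ hq)]
  have h3 := hasSum_sum (s := q.divisors)
    (f := fun d k => Ca q d * (if d ∣ (k+1) then (1:ℝ)/((k:ℝ)+1)^2 else 0))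
    (a := fun d => Ca q d * (Real.pi^2/6/(d:ℝ)^2))
    (fun d hd => (hasSum_mult d (Nat.pos_of_mem_divisors hd)).mul_left (Ca q d))
  exact (funext h1 : _) ▸ h3

/-- the arithmetic function `n ↦ n⁻²` -/
def inv2 : ArithmeticFunction ℝ := ⟨fun n => (((n:ℝ))^2)⁻¹, by simp⟩

lemma inv2_apply (n : ℕ) : inv2 n = ((n:ℝ)^2)⁻¹ := rfl

lemma inv2_mult : inv2.IsMultiplicative := by
  constructor
  · simp [inv2_apply]
  · intro m n _
    simp only [inv2_apply]
    push_cast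
    rw [mul_pow, mul_inv]

/-- `Ff q` as an arithmetic function -/
def Fq (q : ℕ) : ArithmeticFunction ℝ := ⟨fun e => if e = 0 then 0 else Ff q e, by simp⟩

lemma Fq_apply (q e : ℕ) (he : e ≠ 0) : Fq q e = Ff q e := if_neg he

def Aa (m : ℕ) : ℝ := ∑ t ∈ m.divisors, ((μ t : ℤ):ℝ) * ((t:ℝ)^2)⁻¹

lemma claim1 (q : ℕ) (hq : 0 < q) :
    ∑ d ∈ q.divisors, Ca q d * ((d:ℝ)^2)⁻¹
      = ∑ e ∈ q.divisors, (Ff q e * ((e:ℝ)^2)⁻¹) * Aa (q/e) := by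
  set Mu2 : ArithmeticFunction ℝ := ArithmeticFunction.pmul (μ : ArithmeticFunction ℝ) inv2
    with hMu2
  set F2 : ArithmeticFunction ℝ := ArithmeticFunction.pmul (Fq q) inv2 with hF2
  have hMu2_apply : ∀ t : ℕ, Mu2 t = ((μ t : ℤ):ℝ) * ((t:ℝ)^2)⁻¹ := by
    intro t
    rw [hMu2, ArithmeticFunction.pmul_apply, ArithmeticFunction.intCoe_apply, inv2_apply]
  have hF2_apply : ∀ t : ℕ, t ≠ 0 → F2 t = Ff q t * ((t:ℝ)^2)⁻¹ := by
    intro t ht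
    rw [hF2, ArithmeticFunction.pmul_apply, Fq_apply q t ht, inv2_apply]
  have hzMu2 : ∀ m : ℕ, ((ζ : ArithmeticFunction ℝ) * Mu2) m = Aa m := by
    intro m
    rw [ArithmeticFunction.coe_zeta_mul_apply]
    exact Finset.sum_congr rfl fun t _ => hMu2_apply t
  have stepa : ∀ d ∈ q.divisors, (Mu2 * F2) d = Ca q d * ((d:ℝ)^2)⁻¹ := by
    intro d hd
    have hd0 : d ≠ 0 := (Nat.pos_of_mem_divisors hd).ne'
    rw [ArithmeticFunction.mul_apply,
      Nat.sum_divisorsAntidiagonal (f := fun x y => Mu2 x * F2 y),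
      Ca_flip q d hd0, Finset.sum_mul]
    apply Finset.sum_congr rfl
    intro i hi
    obtain ⟨hidvd, -⟩ := Nat.mem_divisors.mp hi
    have hi0 : i ≠ 0 := (Nat.pos_of_mem_divisors hi).ne'
    have hdi0 : d / i ≠ 0 := (Nat.div_pos (Nat.le_of_dvd (Nat.pos_of_ne_zero hd0) hidvd)
      (Nat.pos_of_ne_zero hi0)).ne'
    rw [hMu2_apply i, hF2_apply (d/i) hdi0]
    have hmul : (i : ℝ) * ((d/i : ℕ):ℝ) = (d:ℝ) := by
      rw [← Nat.cast_mul, Nat.mul_div_cancel' hidvd]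
    have : ((i:ℝ)^2)⁻¹ * (((d/i : ℕ):ℝ)^2)⁻¹ = ((d:ℝ)^2)⁻¹ := by
      rw [← mul_inv, ← mul_pow, hmul]
    calc ((μ i : ℤ):ℝ) * ((i:ℝ)^2)⁻¹ * (Ff q (d/i) * (((d/i : ℕ):ℝ)^2)⁻¹)
        = ((μ i : ℤ):ℝ) * Ff q (d/i) * (((i:ℝ)^2)⁻¹ * (((d/i : ℕ):ℝ)^2)⁻¹) := by ring
      _ = ((μ i : ℤ):ℝ) * Ff q (d/i) * ((d:ℝ)^2)⁻¹ := by rw [this]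
  calc ∑ d ∈ q.divisors, Ca q d * ((d:ℝ)^2)⁻¹
      = ∑ d ∈ q.divisors, (Mu2 * F2) d := (Finset.sum_congr rfl stepa).symm
    _ = ((ζ : ArithmeticFunction ℝ) * (Mu2 * F2)) q := by
        rw [ArithmeticFunction.coe_zeta_mul_apply]
    _ = (F2 * ((ζ : ArithmeticFunction ℝ) * Mu2)) q := by ring_nf
    _ = ∑ e ∈ q.divisors, F2 e * ((ζ : ArithmeticFunction ℝ) * Mu2) (q/e) := by
        rw [ArithmeticFunction.mul_apply,
          Nat.sum_divisorsAntidiagonal (f := fun x y => F2 x * ((ζ : ArithmeticFunction ℝ) * Mu2) y)]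
    _ = ∑ e ∈ q.divisors, (Ff q e * ((e:ℝ)^2)⁻¹) * Aa (q/e) := by
        apply Finset.sum_congr rfl
        intro e he
        rw [hF2_apply e (Nat.pos_of_mem_divisors he).ne', hzMu2]


lemma claim2 (q : ℕ) (hq : 0 < q) :
    ∑ e ∈ q.divisors, (Ff q e * ((e:ℝ)^2)⁻¹) * Aa (q/e)
      = ((q:ℝ)^2)⁻¹ * ∑ e ∈ q.divisors, ((μ e : ℤ):ℝ) / (e.totient : ℝ) * ((e:ℝ)^2 * Aa e) := by
  rw [← Nat.sum_div_divisors q (fun e => (Ff q e * ((e:ℝ)^2)⁻¹) * Aa (q/e)), Finset.mul_sum]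
  apply Finset.sum_congr rfl
  intro e he
  obtain ⟨hedvd, -⟩ := Nat.mem_divisors.mp he
  have he0 : 0 < e := Nat.pos_of_mem_divisors he
  have heR : (e:ℝ) ≠ 0 := Nat.cast_ne_zero.mpr he0.ne'
  have hqR : (q:ℝ) ≠ 0 := Nat.cast_ne_zero.mpr hq.ne'
  unfold Ff
  rw [Nat.div_div_self hedvd hq.ne']
  have hphi : ((e.totient : ℕ):ℝ) ≠ 0 := Nat.cast_ne_zero.mpr (Nat.totient_pos.mpr he0).ne'
  have hcast : ((q/e : ℕ):ℝ) = (q:ℝ)/(e:ℝ) := Nat.cast_div hedvd heR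
  rw [hcast]
  field_simp

lemma claim3 (e : ℕ) (he : 0 < e) :
    ((μ e : ℤ):ℝ) / (e.totient : ℝ) * ((e:ℝ)^2 * Aa e)
      = ((μ e : ℤ):ℝ) * ∏ p ∈ e.primeFactors, ((p:ℝ)+1) := by
  by_cases hsf : Squarefree e
  case neg =>
    rw [moebius_eq_zero_of_not_squarefree hsf]
    simp
  case pos =>
    have he0 : (e:ℝ) ≠ 0 := Nat.cast_ne_zero.mpr he.ne'
    have hp0 : ∀ p ∈ e.primeFactors, (p:ℝ) ≠ 0 := fun p hp =>
      Nat.cast_ne_zero.mpr (Nat.prime_of_mem_primeFactors hp).pos.ne'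
    have hAa : Aa e = ∏ p ∈ e.primeFactors, (1 - ((p:ℝ)^2)⁻¹) :=
      (ArithmeticFunction.IsMultiplicative.prodPrimeFactors_one_sub_of_squarefree
        inv2 inv2_mult hsf).symm
    have hsplit : ∏ p ∈ e.primeFactors, (1 - ((p:ℝ)^2)⁻¹)
        = (∏ p ∈ e.primeFactors, (1 - (p:ℝ)⁻¹)) * ∏ p ∈ e.primeFactors, (1 + (p:ℝ)⁻¹) := by
      rw [← Finset.prod_mul_distrib]
      apply Finset.prod_congr rfl
      intro p hp
      have h := hp0 p hp
      field_simp
      ring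
    have heprod : ((e:ℝ)) = ∏ p ∈ e.primeFactors, (p:ℝ) := by
      rw [← Nat.cast_prod, Nat.prod_primeFactors_of_squarefree hsf]
    have hplus : ∏ p ∈ e.primeFactors, ((p:ℝ)+1)
        = (e:ℝ) * ∏ p ∈ e.primeFactors, (1 + (p:ℝ)⁻¹) := by
      rw [heprod, ← Finset.prod_mul_distrib]
      apply Finset.prod_congr rfl
      intro p hp
      field_simp [hp0 p hp]
    have hP1ne : (∏ p ∈ e.primeFactors, (1 - (p:ℝ)⁻¹)) ≠ 0 := by
      rw [Finset.prod_ne_zero_iff]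
      intro p hp
      have hp2 : (2:ℝ) ≤ (p:ℝ) := by
        exact_mod_cast (Nat.prime_of_mem_primeFactors hp).two_le
      have hinv : (p:ℝ)⁻¹ < 1 := inv_lt_one_of_one_lt₀ (by linarith)
      intro hzero
      linarith
    have hphi := congrArg (fun x : ℚ => (x:ℝ)) (Nat.totient_eq_mul_prod_factors e)
    push_cast at hphi
    rw [hphi, hAa, hsplit, hplus, div_mul_eq_mul_div, div_eq_iff (mul_ne_zero he0 hP1ne)]
    ring

lemma sf_prod (s : Finset ℕ) (hs : ∀ p ∈ s, p.Prime) : Squarefree (∏ p ∈ s, p) := by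
  classical
  induction s using Finset.induction_on with
  | empty => simpa using squarefree_one
  | @insert a t ha ih =>
    rw [Finset.prod_insert ha]
    have hap : a.Prime := hs a (Finset.mem_insert_self a t)
    have ht : ∀ p ∈ t, p.Prime := fun p hp => hs p (Finset.mem_insert_of_mem hp)
    have hcop : Nat.Coprime a (∏ p ∈ t, p) := by
      apply Nat.Coprime.prod_right
      intro p hp
      exact (Nat.coprime_primes hap (ht p hp)).mpr (fun h => ha (h ▸ hp))
    rw [Nat.squarefree_mul hcop]
    exact ⟨hap.squarefree, ih ht⟩

lemma claim4 (q : ℕ) (hq : 0 < q) :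
    ∑ e ∈ q.divisors, ((μ e : ℤ):ℝ) * ∏ p ∈ e.primeFactors, ((p:ℝ)+1)
      = ∏ p ∈ q.primeFactors, (-(p:ℝ)) := by
  classical
  set r := ∏ p ∈ q.primeFactors, p with hr
  have hprimes : ∀ p ∈ q.primeFactors, p.Prime := fun p hp => Nat.prime_of_mem_primeFactors hp
  have hrsf : Squarefree r := sf_prod _ hprimes
  have hr0 : r ≠ 0 := hrsf.ne_zero
  have hrq : r ∣ q := Nat.prod_primeFactors_dvd q
  have hrpf : r.primeFactors = q.primeFactors := Nat.primeFactors_prod hprimes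
  have hsets : q.divisors.filter Squarefree = r.divisors := by
    ext e
    simp only [Finset.mem_filter, Nat.mem_divisors]
    constructor
    · rintro ⟨⟨heq, -⟩, hesf⟩
      refine ⟨?_, hr0⟩
      calc e = ∏ p ∈ e.primeFactors, p := (Nat.prod_primeFactors_of_squarefree hesf).symm
        _ ∣ r := Finset.prod_dvd_prod_of_subset _ _ _ (Nat.primeFactors_mono heq hq.ne')
    · rintro ⟨her, -⟩
      exact ⟨⟨her.trans hrq, hq.ne'⟩, hrsf.squarefree_of_dvd her⟩
  set Bf : ArithmeticFunction ℝ := ArithmeticFunction.prodPrimeFactors (fun p => (p:ℝ)+1)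
    with hBf
  have hBmult : Bf.IsMultiplicative :=
    ArithmeticFunction.IsMultiplicative.prodPrimeFactors (fun p => ((p:ℕ):ℝ)+1)
  have hstep := ArithmeticFunction.IsMultiplicative.prodPrimeFactors_one_sub_of_squarefree
    Bf hBmult hrsf
  calc ∑ e ∈ q.divisors, ((μ e : ℤ):ℝ) * ∏ p ∈ e.primeFactors, ((p:ℝ)+1)
      = ∑ e ∈ q.divisors.filter Squarefree, ((μ e : ℤ):ℝ) * ∏ p ∈ e.primeFactors, ((p:ℝ)+1) := by
        symm
        apply Finset.sum_filter_of_ne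
        intro e he hne
        by_contra hc
        apply hne
        rw [moebius_eq_zero_of_not_squarefree hc]
        simp
    _ = ∑ d ∈ r.divisors, ((μ d : ℤ):ℝ) * Bf d := by
        rw [hsets]
        apply Finset.sum_congr rfl
        intro d hd
        rw [hBf, ArithmeticFunction.prodPrimeFactors_apply (Nat.pos_of_mem_divisors hd).ne']
    _ = ∏ p ∈ r.primeFactors, (1 - Bf p) := hstep.symm
    _ = ∏ p ∈ q.primeFactors, (-(p:ℝ)) := by
        rw [hrpf]
        apply Finset.prod_congr rfl
        intro p hp
        rw [hBf, ArithmeticFunction.prodPrimeFactors_apply (hprimes p hp).pos.ne',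
          (hprimes p hp).primeFactors, Finset.prod_singleton]
        ring

lemma Vval (q : ℕ) (hq : 0 < q) :
    ∑ d ∈ q.divisors, Ca q d * (Real.pi^2/6/(d:ℝ)^2)
      = Real.pi ^ 2 / 6 * (-1:ℝ) ^ q.primeFactors.card *
          (∏ p ∈ q.primeFactors, (p:ℝ)) / (q:ℝ)^2 := by
  have h1 : ∀ d : ℕ, Ca q d * (Real.pi^2/6/(d:ℝ)^2)
      = (Real.pi^2/6) * (Ca q d * ((d:ℝ)^2)⁻¹) := by
    intro d
    rw [div_eq_mul_inv (Real.pi^2/6)]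
    ring
  simp_rw [h1]
  rw [← Finset.mul_sum, claim1 q hq, claim2 q hq]
  have h2 : ∑ e ∈ q.divisors, ((μ e : ℤ):ℝ) / (e.totient : ℝ) * ((e:ℝ)^2 * Aa e)
      = ∑ e ∈ q.divisors, ((μ e : ℤ):ℝ) * ∏ p ∈ e.primeFactors, ((p:ℝ)+1) :=
    Finset.sum_congr rfl (fun e he => claim3 e (Nat.pos_of_mem_divisors he))
  rw [h2, claim4 q hq]
  have h3 : ∏ p ∈ q.primeFactors, (-(p:ℝ))
      = (-1:ℝ)^q.primeFactors.card * ∏ p ∈ q.primeFactors, (p:ℝ) := by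
    rw [← Finset.prod_const, ← Finset.prod_mul_distrib]
    apply Finset.prod_congr rfl
    intros
    ring
  rw [h3]
  field_simp

lemma summand_eq (q : ℕ) (hq : 0 < q) (a : ℤ) (haq : Int.gcd a q = 1) (k : ℕ) :
    ((1 / (((q / Nat.gcd q (k + 1)).totient : ℝ) * ((k : ℝ) + 1) ^ 2) : ℝ) : ℂ) *
        ∑ ℓ ∈ (Finset.Icc 1 (q / Nat.gcd q (k + 1))).filter
            (fun ℓ => Nat.Coprime ℓ (q / Nat.gcd q (k + 1))),
          ee ((a : ℝ) * ((k : ℝ) + 1) / (Nat.gcd q (k + 1) : ℝ) * ℓ /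
            ((q / Nat.gcd q (k + 1) : ℕ) : ℝ))
      = (((Ff q (Nat.gcd q (k+1)) / ((k:ℝ)+1)^2 : ℝ)) : ℂ) := by
  set d := Nat.gcd q (k+1) with hd_def
  have hd : 0 < d := Nat.gcd_pos_of_pos_left _ hq
  have hdq : d ∣ q := Nat.gcd_dvd_left q (k+1)
  have hdk : d ∣ (k+1) := Nat.gcd_dvd_right q (k+1)
  set N := q / d with hN_def
  have hN : 0 < N := Nat.div_pos (Nat.le_of_dvd hq hdq) hd
  set c : ℕ := (k+1) / d with hc_def
  have hdR : (d:ℝ) ≠ 0 := Nat.cast_ne_zero.mpr hd.ne'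
  have hcR : ((c:ℕ):ℝ) = ((k:ℝ)+1) / (d:ℝ) := by
    rw [hc_def, Nat.cast_div hdk hdR]
    push_cast
    ring
  have haq' : Nat.Coprime a.natAbs q := by
    have : Int.gcd a q = a.natAbs.gcd q := by
      simp [Int.gcd]
    rwa [this] at haq
  have ha' : Nat.Coprime a.natAbs N := haq'.coprime_dvd_right (Nat.div_dvd_of_dvd hdq)
  have hc' : Nat.Coprime c N := (Nat.coprime_div_gcd_div_gcd hd).symm
  have hb : Int.gcd (a * (c:ℤ)) N = 1 := by
    have h1 : (a * (c:ℤ)).natAbs = a.natAbs * c := by simp [Int.natAbs_mul]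
    have h2 : Nat.Coprime (a.natAbs * c) N := Nat.Coprime.mul ha' hc'
    simp only [Int.gcd, h1, Int.natAbs_natCast]
    exact h2
  have harg : ∀ ℓ : ℕ, (a : ℝ) * ((k : ℝ) + 1) / (d : ℝ) * ℓ / ((N : ℕ) : ℝ)
      = (((a * (c:ℤ)) : ℤ) : ℝ) * (ℓ:ℝ) / (N:ℝ) := by
    intro ℓ
    have : (((a * (c:ℤ)) : ℤ) : ℝ) = (a:ℝ) * ((k:ℝ)+1) / (d:ℝ) := by
      push_cast
      rw [hcR]
      ring
    rw [this]
  have hram := ram N hN (a * (c:ℤ)) hb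
  calc ((1 / (((N).totient : ℝ) * ((k : ℝ) + 1) ^ 2) : ℝ) : ℂ) *
        ∑ ℓ ∈ (Finset.Icc 1 N).filter (fun ℓ => Nat.Coprime ℓ N),
          ee ((a : ℝ) * ((k : ℝ) + 1) / (d : ℝ) * ℓ / ((N : ℕ) : ℝ))
      = ((1 / (((N).totient : ℝ) * ((k : ℝ) + 1) ^ 2) : ℝ) : ℂ) *
        ∑ ℓ ∈ (Finset.Icc 1 N).filter (fun ℓ => Nat.Coprime ℓ N),
          ee ((((a * (c:ℤ)) : ℤ) : ℝ) * ℓ / (N:ℝ)) := by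
        congr 1
        exact Finset.sum_congr rfl fun ℓ _ => by rw [harg ℓ]
    _ = ((1 / (((N).totient : ℝ) * ((k : ℝ) + 1) ^ 2) : ℝ) : ℂ) * ((μ N : ℤ) : ℂ) := by
        rw [hram]
    _ = (((Ff q d / ((k:ℝ)+1)^2 : ℝ)) : ℂ) := by
        rw [show ((μ N : ℤ) : ℂ) = (((μ N : ℤ) : ℝ) : ℂ) from by push_cast; rfl]
        rw [← Complex.ofReal_mul]
        congr 1
        unfold Ff
        rw [← hN_def]
        field_simp

end Stmt19

theorem statement19 (q : ℕ) (hq : 0 < q) (a : ℤ) (haq : Int.gcd a q = 1) :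
    (∑' k : ℕ,
      ((1 / (((q / Nat.gcd q (k + 1)).totient : ℝ) * ((k : ℝ) + 1) ^ 2) : ℝ) : ℂ) *
        ∑ ℓ ∈ (Finset.Icc 1 (q / Nat.gcd q (k + 1))).filter
            (fun ℓ => Nat.Coprime ℓ (q / Nat.gcd q (k + 1))),
          ee ((a : ℝ) * ((k : ℝ) + 1) / (Nat.gcd q (k + 1) : ℝ) * ℓ /
            ((q / Nat.gcd q (k + 1) : ℕ) : ℝ))) =
    (((Real.pi ^ 2 / 6) * (-1 : ℝ) ^ (q.primeFactors.card) *
        (∏ p ∈ q.primeFactors, (p : ℝ)) / (q : ℝ) ^ 2 : ℝ) : ℂ) := by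
  calc (∑' k : ℕ,
      ((1 / (((q / Nat.gcd q (k + 1)).totient : ℝ) * ((k : ℝ) + 1) ^ 2) : ℝ) : ℂ) *
        ∑ ℓ ∈ (Finset.Icc 1 (q / Nat.gcd q (k + 1))).filter
            (fun ℓ => Nat.Coprime ℓ (q / Nat.gcd q (k + 1))),
          ee ((a : ℝ) * ((k : ℝ) + 1) / (Nat.gcd q (k + 1) : ℝ) * ℓ /
            ((q / Nat.gcd q (k + 1) : ℕ) : ℝ)))
      = ∑' k : ℕ, (((Stmt19.Ff q (Nat.gcd q (k+1)) / ((k:ℝ)+1)^2 : ℝ)) : ℂ) :=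
        tsum_congr (Stmt19.summand_eq q hq a haq)
    _ = (((∑' k : ℕ, (Stmt19.Ff q (Nat.gcd q (k+1)) / ((k:ℝ)+1)^2) : ℝ)) : ℂ) :=
        (Complex.ofReal_tsum _).symm
    _ = (((Real.pi ^ 2 / 6) * (-1 : ℝ) ^ (q.primeFactors.card) *
        (∏ p ∈ q.primeFactors, (p : ℝ)) / (q : ℝ) ^ 2 : ℝ) : ℂ) := by
        rw [(Stmt19.main_hasSum q hq).tsum_eq, Stmt19.Vval q hq]
end
end
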